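/- Let C be the Cantor middle-thirds set and χ_C : ℝ → ℝ its characteristic function. Then 0 is the T₆ limit of χ_C at 0 (indeed the exceptional sets {x ∈ (−δ, δ) \ {0} : |χ_C(x)| ≥ ε} have Lebesgue measure zero), but 0 is not the T₅ limit of χ_C at 0, since for every δ > 0 the set {x ∈ (−δ, δ) \ {0} : |χ_C(x)| ≥ 1} = C ∩ (0, δ) is uncountable. -/

import Mathlib

open Set Pointwise

/-- Characteristic function of the Cantor set. -/
noncomputable def chiCantor : ℝ → ℝ := Set.indicator cantorSet (fun _ => 1)

open MeasureTheory in
lemma volume_preCantorSet_le (n : ℕ) :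
    volume (preCantorSet n) ≤ ((2:ENNReal)/3)^n := by
  induction n with
  | zero => simp [Real.volume_Icc]
  | succ n ih =>
    have h1 : ((·/3) : ℝ → ℝ) '' preCantorSet n = (3⁻¹ : ℝ) • preCantorSet n := by
      ext x; simp [Set.mem_smul_set, div_eq_inv_mul, mul_comm]
    have h2 : ((fun x => (2+x)/3) : ℝ → ℝ) '' preCantorSet n
        = (2/3 : ℝ) +ᵥ ((3⁻¹ : ℝ) • preCantorSet n) := by
      ext x
      simp only [Set.mem_image, Set.mem_vadd_set, Set.mem_smul_set]
      constructor
      · rintro ⟨y, hy, rfl⟩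
        exact ⟨3⁻¹ * y, ⟨y, hy, rfl⟩, by simp only [vadd_eq_add]; ring⟩
      · rintro ⟨_, ⟨y, hy, rfl⟩, rfl⟩
        exact ⟨y, hy, by simp only [vadd_eq_add, smul_eq_mul]; ring⟩
    have hsmul : volume ((3⁻¹ : ℝ) • preCantorSet n)
        = ENNReal.ofReal (1/3) * volume (preCantorSet n) := by
      rw [Measure.addHaar_smul]
      norm_num [abs_of_nonneg]
    calc volume (preCantorSet (n+1))
        ≤ volume (((·/3) : ℝ → ℝ) '' preCantorSet n)
          + volume (((fun x => (2+x)/3) : ℝ → ℝ) '' preCantorSet n) := by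
          rw [preCantorSet_succ]; exact measure_union_le _ _
      _ = ENNReal.ofReal (1/3) * volume (preCantorSet n)
          + ENNReal.ofReal (1/3) * volume (preCantorSet n) := by
          rw [h1, h2, measure_vadd, hsmul]
      _ ≤ ENNReal.ofReal (1/3) * ((2:ENNReal)/3)^n
          + ENNReal.ofReal (1/3) * ((2:ENNReal)/3)^n := by
          gcongr
      _ = ((2:ENNReal)/3)^(n+1) := by
          have h13 : ENNReal.ofReal (1/3) = (1:ENNReal)/3 := by
            rw [ENNReal.ofReal_div_of_pos (by norm_num)]
            norm_num
          rw [h13, pow_succ,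
            show ((2:ENNReal)/3) = 2 * ((1:ENNReal)/3) by
              rw [div_eq_mul_inv, div_eq_mul_inv, one_mul]]
          ring

open MeasureTheory in
lemma volume_cantorSet : volume cantorSet = 0 := by
  have h : ∀ n, volume cantorSet ≤ ((2:ENNReal)/3)^n := fun n =>
    (measure_mono (Set.iInter_subset _ n)).trans (volume_preCantorSet_le n)
  have ht : Filter.Tendsto (fun n => ((2:ENNReal)/3)^n) Filter.atTop (nhds 0) :=
    ENNReal.tendsto_pow_atTop_nhds_zero_of_lt_one
      (by rw [ENNReal.div_lt_iff] <;> norm_num)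
  have := ge_of_tendsto' ht h
  exact le_antisymm this (zero_le)

/-- Scaled Cantor function landing in the Cantor set. -/
noncomputable def cantorEmb (a : ℕ → Bool) : ℝ := (2/3) * Cardinal.cantorFunction (1/3) a

lemma cantorFunction_nonneg (a : ℕ → Bool) : 0 ≤ Cardinal.cantorFunction (1/3) a :=
  tsum_nonneg fun n => Cardinal.cantorFunctionAux_nonneg (by norm_num)

lemma cantorFunction_le_32 (a : ℕ → Bool) : Cardinal.cantorFunction (1/3) a ≤ 3/2 := by
  have h := Cardinal.cantorFunction_le (c := (1/3:ℝ)) (f := a) (g := fun _ => true)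
    (by norm_num) (by norm_num) (fun n _ => rfl)
  refine h.trans ?_
  have : Cardinal.cantorFunction (1/3:ℝ) (fun _ => true) = ∑' n : ℕ, ((1:ℝ)/3)^n := by
    unfold Cardinal.cantorFunction Cardinal.cantorFunctionAux
    simp
  rw [this, tsum_geometric_of_lt_one (by norm_num) (by norm_num)]
  norm_num

lemma cantorEmb_nonneg (a : ℕ → Bool) : 0 ≤ cantorEmb a :=
  mul_nonneg (by norm_num) (cantorFunction_nonneg a)

lemma cantorEmb_le_one (a : ℕ → Bool) : cantorEmb a ≤ 1 := by
  have := cantorFunction_le_32 a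
  unfold cantorEmb; nlinarith

lemma cantorEmb_succ (a : ℕ → Bool) :
    cantorEmb a = ((if a 0 then 2 else 0) + cantorEmb (fun n => a (n+1))) / 3 := by
  unfold cantorEmb
  rw [Cardinal.cantorFunction_succ a (by norm_num) (by norm_num)]
  cases h : a 0 <;> simp [h] <;> ring

lemma cantorEmb_mem_pre (n : ℕ) (a : ℕ → Bool) : cantorEmb a ∈ preCantorSet n := by
  induction n generalizing a with
  | zero => exact ⟨cantorEmb_nonneg a, cantorEmb_le_one a⟩
  | succ n ih =>
    rw [preCantorSet_succ]
    cases h : a 0 with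
    | false =>
      left
      exact ⟨cantorEmb (fun n => a (n+1)), ih _, by rw [cantorEmb_succ a, h]; simp⟩
    | true =>
      right
      exact ⟨cantorEmb (fun n => a (n+1)), ih _, by rw [cantorEmb_succ a, h]; simp⟩

lemma cantorEmb_mem (a : ℕ → Bool) : cantorEmb a ∈ cantorSet :=
  Set.mem_iInter.mpr fun n => cantorEmb_mem_pre n a

lemma cantorEmb_injective : Function.Injective cantorEmb := by
  intro a b h
  exact Cardinal.cantorFunction_injective (by norm_num) (by norm_num)
    (mul_left_cancel₀ (by norm_num : (2/3:ℝ) ≠ 0) h)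

/-- Scaling the Cantor set. -/
lemma div_three_mem_cantorSet {x : ℝ} (hx : x ∈ cantorSet) : x / 3 ∈ cantorSet := by
  rw [cantorSet, Set.mem_iInter] at hx ⊢
  intro n
  cases n with
  | zero =>
    have h0 := hx 0
    simp only [preCantorSet_zero, Set.mem_Icc] at h0 ⊢
    constructor <;> nlinarith [h0.1, h0.2]
  | succ n => exact Or.inl ⟨x, hx n, rfl⟩

lemma cantorSet_inter_uncountable (δ : ℝ) (hδ : 0 < δ) :
    ¬ (cantorSet ∩ Set.Ioo 0 δ).Countable := by
  obtain ⟨k, hk⟩ := exists_pow_lt_of_lt_one hδ (by norm_num : (1/3:ℝ) < 1)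
  -- embed via a ↦ cantorEmb (true prepended) / 3^k
  set f : (ℕ → Bool) → ℝ := fun a => cantorEmb (fun n => Nat.casesOn n true a) / 3^k with hf
  have hmem : ∀ a, f a ∈ cantorSet ∩ Set.Ioo 0 δ := by
    intro a
    have h1 : cantorEmb (fun n => Nat.casesOn n true a) ∈ cantorSet :=
      cantorEmb_mem _
    have hge : (2/3 : ℝ) ≤ cantorEmb (fun n => Nat.casesOn n true a) := by
      rw [cantorEmb_succ]
      have hif : (if (Nat.casesOn 0 true a : Bool) = true then (2:ℝ) else 0) = 2 := if_pos rfl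
      rw [hif]
      linarith [cantorEmb_nonneg (fun n => (fun m : ℕ => (Nat.casesOn m true a : Bool)) (n+1))]
    have hle := cantorEmb_le_one (fun n => Nat.casesOn n true a)
    have hdiv : ∀ m, ∀ x ∈ cantorSet, x / 3^m ∈ cantorSet := by
      intro m
      induction m with
      | zero => simp
      | succ m ih =>
        intro x hx
        have := div_three_mem_cantorSet (ih x hx)
        rw [div_div] at this
        rw [pow_succ]
        exact this
    refine ⟨hdiv k _ h1, ?_, ?_⟩
    · positivity
    · calc cantorEmb (fun n => Nat.casesOn n true a) / 3^k
          ≤ 1 / 3^k := by gcongr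
        _ = (1/3)^k := by rw [div_pow, one_pow]
        _ < δ := hk
  have hinj : Function.Injective f := by
    intro a b hab
    have h3 : (3:ℝ)^k ≠ 0 := by positivity
    have hab' := congrArg (· * (3:ℝ)^k) hab
    simp only [hf, div_mul_cancel₀ _ h3] at hab'
    have := cantorEmb_injective hab'
    funext n
    exact congrFun this (n+1)
  intro hc
  have h1 : (Set.univ : Set (ℕ → Bool)).Countable :=
    ((hc.preimage hinj).mono (fun a _ => hmem a))
  have h2 : Countable (ℕ → Bool) := Set.countable_univ_iff.mp h1
  have h3 : Cardinal.aleph0 < Cardinal.mk (ℕ → Bool) := by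
    rw [Cardinal.mk_arrow]
    simpa [Cardinal.mk_bool, Cardinal.mk_nat] using Cardinal.cantor Cardinal.aleph0
  exact absurd Cardinal.mk_le_aleph0 h3.not_ge

theorem stmt_7 :
    (∀ ε > 0, ∀ δ > 0,
      MeasureTheory.volume {x | x ∈ Set.Ioo (-δ) δ ∧ x ≠ 0 ∧ ε ≤ |chiCantor x|} = 0) ∧
    (∀ δ > 0, {x | x ∈ Set.Ioo (-δ) δ ∧ x ≠ 0 ∧ (1:ℝ) ≤ |chiCantor x|} = cantorSet ∩ Set.Ioo 0 δ) ∧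
    (∀ δ > 0, ¬ ({x | x ∈ Set.Ioo (-δ) δ ∧ x ≠ 0 ∧ (1:ℝ) ≤ |chiCantor x|}).Countable) := by
  have key : ∀ ε : ℝ, 0 < ε → ∀ δ : ℝ,
      {x | x ∈ Set.Ioo (-δ) δ ∧ x ≠ 0 ∧ ε ≤ |chiCantor x|} ⊆ cantorSet := by
    intro ε hε δ x ⟨_, _, hx⟩
    by_contra h
    rw [chiCantor, Set.indicator_of_notMem h] at hx
    simp at hx; linarith
  refine ⟨fun ε hε δ hδ => ?_, fun δ hδ => ?_, fun δ hδ => ?_⟩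
  · exact MeasureTheory.measure_mono_null (key ε hε δ) volume_cantorSet
  · ext x
    simp only [Set.mem_setOf_eq, Set.mem_inter_iff, Set.mem_Ioo]
    constructor
    · rintro ⟨⟨h1, h2⟩, h3, h4⟩
      have hxc : x ∈ cantorSet := key 1 one_pos δ ⟨⟨h1, h2⟩, h3, h4⟩
      have := (cantorSet_subset_unitInterval hxc).1
      exact ⟨hxc, lt_of_le_of_ne this (Ne.symm h3), h2⟩
    · rintro ⟨hxc, h1, h2⟩
      refine ⟨⟨by linarith, h2⟩, ne_of_gt h1, ?_⟩
      rw [chiCantor, Set.indicator_of_mem hxc]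
      simp
  · rw [(by
      ext x
      simp only [Set.mem_setOf_eq, Set.mem_inter_iff, Set.mem_Ioo]
      constructor
      · rintro ⟨⟨h1, h2⟩, h3, h4⟩
        have hxc : x ∈ cantorSet := key 1 one_pos δ ⟨⟨h1, h2⟩, h3, h4⟩
        have := (cantorSet_subset_unitInterval hxc).1
        exact ⟨hxc, lt_of_le_of_ne this (Ne.symm h3), h2⟩
      · rintro ⟨hxc, h1, h2⟩
        refine ⟨⟨by linarith, h2⟩, ne_of_gt h1, ?_⟩
        rw [chiCantor, Set.indicator_of_mem hxc]
        simp : {x | x ∈ Set.Ioo (-δ) δ ∧ x ≠ 0 ∧ (1:ℝ) ≤ |chiCantor x|} = cantorSet ∩ Set.Ioo 0 δ)]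
    exact cantorSet_inter_uncountable δ hδ
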